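/- Let k ≥ 3 and T = [k] \ {i} ⊂ ℤ with 2 ≤ i ≤ k-1. Let ℓ = 2k(k-2). Then for any finite set C with |C| ≥ ℓ there exists a set X ⊂ ℤ × C such that: (a) X is a disjoint union of sets of the form (T + n) × {c} with n ∈ ℤ, c ∈ C; and (b) for every n ∈ ℤ, |({n} × C) ∩ X| ≡ 1 (mod k-1). -/

import Mathlib

def ggF (K i : ℕ) (hi1 : 2 ≤ i) (hi2 : i ≤ K + 2) (n : ℤ) : ZMod (K + 2) :=
  if h : n < 0 then
    1 + ggF K i hi1 hi2 (n + ((K + 3 - i : ℕ) : ℤ))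
      - ∑ j ∈ (Finset.range (K + 2)).attach, ggF K i hi1 hi2 (n + 1 + ((j : ℕ) : ℤ))
  else if h2 : n ≤ (K : ℤ) + 1 then 0
  else
    1 + ggF K i hi1 hi2 (n - ((i : ℤ) - 1))
      - ∑ j ∈ (Finset.range (K + 2)).attach, ggF K i hi1 hi2 (n - 1 - ((j : ℕ) : ℤ))
termination_by (if 0 ≤ n then n.toNat else K + 3 + (-n).toNat)
decreasing_by
  · split_ifs <;> omega
  · have hj := Finset.mem_range.mp j.2
    split_ifs <;> omega
  · split_ifs <;> omega
  · have hj := Finset.mem_range.mp j.2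
    split_ifs <;> omega

lemma ggF_rel (K i : ℕ) (hi1 : 2 ≤ i) (hi2 : i ≤ K + 2) (m : ℤ) :
    ∑ v ∈ Finset.range (K + 3), ggF K i hi1 hi2 (m - 1 - (v : ℤ)) =
      1 + ggF K i hi1 hi2 (m - (i : ℤ)) := by
  by_cases hm : (K : ℤ) + 3 ≤ m
  · have h0 : ggF K i hi1 hi2 (m - 1) =
        1 + ggF K i hi1 hi2 (m - 1 - ((i : ℤ) - 1))
          - ∑ a ∈ Finset.range (K + 2), ggF K i hi1 hi2 (m - 1 - 1 - (a : ℤ)) := by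
      conv_lhs => rw [ggF]
      rw [dif_neg (by omega), dif_neg (by omega)]
      rw [Finset.sum_attach (Finset.range (K + 2))
        (fun a : ℕ => ggF K i hi1 hi2 (m - 1 - 1 - (a : ℤ)))]
    have hsplit : ∑ v ∈ Finset.range (K + 3), ggF K i hi1 hi2 (m - 1 - (v : ℤ)) =
        (∑ v ∈ Finset.range (K + 2), ggF K i hi1 hi2 (m - 1 - ((v + 1 : ℕ) : ℤ)))
          + ggF K i hi1 hi2 (m - 1 - ((0 : ℕ) : ℤ)) :=
      Finset.sum_range_succ' _ (K + 2)
    have hc : ∑ v ∈ Finset.range (K + 2), ggF K i hi1 hi2 (m - 1 - ((v + 1 : ℕ) : ℤ)) =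
        ∑ a ∈ Finset.range (K + 2), ggF K i hi1 hi2 (m - 1 - 1 - (a : ℤ)) :=
      Finset.sum_congr rfl (fun v _ => by congr 1; push_cast; ring)
    have hz : m - 1 - ((0 : ℕ) : ℤ) = m - 1 := by simp
    have harg : m - 1 - ((i : ℤ) - 1) = m - (i : ℤ) := by ring
    rw [hsplit, hc, hz, h0, harg]
    ring
  · have h0 : ggF K i hi1 hi2 (m - 1 - ((K + 2 : ℕ) : ℤ)) =
        1 + ggF K i hi1 hi2 (m - 1 - ((K + 2 : ℕ) : ℤ) + ((K + 3 - i : ℕ) : ℤ))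
          - ∑ a ∈ Finset.range (K + 2),
              ggF K i hi1 hi2 (m - 1 - ((K + 2 : ℕ) : ℤ) + 1 + (a : ℤ)) := by
      conv_lhs => rw [ggF]
      rw [dif_pos (by push_cast; omega)]
      rw [Finset.sum_attach (Finset.range (K + 2))
        (fun a : ℕ => ggF K i hi1 hi2 (m - 1 - ((K + 2 : ℕ) : ℤ) + 1 + (a : ℤ)))]
    have hsplit : ∑ v ∈ Finset.range (K + 3), ggF K i hi1 hi2 (m - 1 - (v : ℤ)) =
        (∑ v ∈ Finset.range (K + 2), ggF K i hi1 hi2 (m - 1 - (v : ℤ)))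
          + ggF K i hi1 hi2 (m - 1 - ((K + 2 : ℕ) : ℤ)) :=
      Finset.sum_range_succ _ (K + 2)
    have hrefl : ∑ v ∈ Finset.range (K + 2), ggF K i hi1 hi2 (m - 1 - (v : ℤ)) =
        ∑ a ∈ Finset.range (K + 2),
          ggF K i hi1 hi2 (m - 1 - ((K + 2 : ℕ) : ℤ) + 1 + (a : ℤ)) := by
      conv_lhs => rw [← Finset.sum_range_reflect]
      apply Finset.sum_congr rfl
      intro v hv
      have hv' : v < K + 2 := Finset.mem_range.mp hv
      congr 1
      omega
    have hhole : m - 1 - ((K + 2 : ℕ) : ℤ) + ((K + 3 - i : ℕ) : ℤ) = m - (i : ℤ) := by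
      omega
    rw [hsplit, hrefl, h0, hhole]
    ring

lemma int_eq_of_close (c : ℕ) (hc : 0 < c) (n n' : ℤ)
    (h : (n % (c : ℤ)).toNat = (n' % (c : ℤ)).toNat)
    (h1 : n - n' < (c : ℤ)) (h2 : n' - n < (c : ℤ)) : n = n' := by
  have h0 : (c : ℤ) ≠ 0 := by exact_mod_cast hc.ne'
  have e1 : 0 ≤ n % (c : ℤ) := Int.emod_nonneg n h0
  have e2 : 0 ≤ n' % (c : ℤ) := Int.emod_nonneg n' h0
  have e3 : n % (c : ℤ) = n' % (c : ℤ) := by omega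
  have hdvd : (c : ℤ) ∣ n' - n := Int.ModEq.dvd e3
  rcases hdvd with ⟨t, ht⟩
  have ht0 : t = 0 := by
    by_contra h'
    rcases lt_or_gt_of_ne h' with h' | h'
    · have : (c : ℤ) * t ≤ (c : ℤ) * (-1) :=
        mul_le_mul_of_nonneg_left (by omega) (by omega)
      have : (c : ℤ) * (-1) = -(c : ℤ) := by ring
      omega
    · have hle : (c : ℤ) * 1 ≤ (c : ℤ) * t :=
        mul_le_mul_of_nonneg_left (by omega) (by omega)
      have : (c : ℤ) * 1 = (c : ℤ) := by ring
      omega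
  rw [ht0, mul_zero] at ht
  omega

/-- for `T = [k] \ {i}` and any finite set `C` with
`|C| ≥ 2k(k-2)`, there is `X ⊆ ℤ × C` which is a disjoint union of sets
`(T + n) × {c}` and meets each column `{n} × C` in `1 (mod k-1)` points. -/
theorem specialDimensionSimple (k i : ℕ) (hk : 3 ≤ k) (hi₁ : 2 ≤ i)
    (hi₂ : i ≤ k - 1) {α : Type*} (C : Finset α)
    (hC : 2 * k * (k - 2) ≤ C.card) :
    ∃ X : Set (ℤ × α),
      (∃ P : Set (Set (ℤ × α)),
        (∀ Q ∈ P, ∃ (n : ℤ) (c : α), c ∈ C ∧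
          Q = {p : ℤ × α | p.2 = c ∧
                 ∃ m : ℤ, (1 ≤ m ∧ m ≤ (k : ℤ) ∧ m ≠ (i : ℤ)) ∧
                   p.1 = m + n}) ∧
        P.PairwiseDisjoint id ∧ ⋃₀ P = X) ∧
      (∀ n : ℤ,
        ({p : ℤ × α | p.1 = n ∧ p.2 ∈ C} ∩ X).ncard % (k - 1) = 1 % (k - 1)) := by
  classical
  obtain ⟨K, rfl⟩ : ∃ K, k = K + 3 := ⟨k - 3, by omega⟩
  have hi2' : i ≤ K + 2 := by omega
  haveI : NeZero (K + 2) := ⟨by omega⟩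
  set g : ℤ → ℕ := fun n => (ggF K i hi₁ hi2' n).val with hgdef
  have hgK : ∀ n, g n < K + 2 := fun n => ZMod.val_lt _
  have hgcast : ∀ n, ((g n : ℕ) : ZMod (K + 2)) = ggF K i hi₁ hi2' n := fun n => by
    simp [hgdef, ZMod.natCast_val, ZMod.cast_id]
  -- choose the rows
  have hM : 2 * (K + 3) * (K + 1) ≤ C.card := by
    rw [show (K + 3) - 2 = K + 1 from by omega] at hC
    exact hC
  obtain ⟨C', hC'sub, hC'card⟩ := Finset.exists_subset_card_eq hM
  set e : Fin (2 * (K + 3) * (K + 1)) → α :=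
    (fun v => (C'.equivFin.symm (finCongr hC'card.symm v) : α)) with hedef
  have he_inj : Function.Injective e := by
    intro a b hab
    have h1 := C'.equivFin.symm.injective (Subtype.ext hab)
    exact (finCongr hC'card.symm).injective h1
  have he_mem : ∀ v, e v ∈ C := fun v => hC'sub (C'.equivFin.symm _).2
  set R : ℤ → ℕ := fun n => (n % ((2 * (K + 3) : ℕ) : ℤ)).toNat with hRdef
  have hR_lt : ∀ n, R n < 2 * (K + 3) := by
    intro n
    have h1 := Int.emod_nonneg n (show ((2 * (K + 3) : ℕ) : ℤ) ≠ 0 by push_cast; omega)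
    have h2 := Int.emod_lt_of_pos n (show (0 : ℤ) < ((2 * (K + 3) : ℕ) : ℤ) by push_cast; omega)
    simp only [hRdef]
    omega
  have hRn : ∀ n n' : ℤ, R n = R n' →
      n - n' < ((2 * (K + 3) : ℕ) : ℤ) → n' - n < ((2 * (K + 3) : ℕ) : ℤ) → n = n' := by
    intro n n' h hb1 hb2
    exact int_eq_of_close (2 * (K + 3)) (by omega) n n' h hb1 hb2
  have hidx : ∀ (n : ℤ) (j : ℕ), R n * (K + 1) + min j K < 2 * (K + 3) * (K + 1) := by
    intro n j
    have h1 : R n + 1 ≤ 2 * (K + 3) := hR_lt n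
    have h2 : (R n + 1) * (K + 1) ≤ 2 * (K + 3) * (K + 1) := Nat.mul_le_mul_right _ h1
    have h3 : min j K ≤ K := min_le_right _ _
    have h4 : R n * (K + 1) + min j K < (R n + 1) * (K + 1) := by
      have : (R n + 1) * (K + 1) = R n * (K + 1) + (K + 1) := by ring
      omega
    omega
  set col : ℤ → ℕ → α := fun n j => e ⟨R n * (K + 1) + min j K, hidx n j⟩ with hcoldef
  have hcol_mem : ∀ n j, col n j ∈ C := fun n j => he_mem _
  have hcol_inj : ∀ n n' j j', j ≤ K → j' ≤ K → col n j = col n' j' →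
      R n = R n' ∧ j = j' := by
    intro n n' j j' hj hj' h
    have h0 := he_inj h
    have h1 : R n * (K + 1) + j = R n' * (K + 1) + j' := by
      have h2 := h0
      rw [Fin.mk.injEq] at h2
      rwa [min_eq_left hj, min_eq_left hj'] at h2
    have hjj : j = j' := by
      rcases Nat.lt_trichotomy (R n) (R n') with hlt | heq | hlt
      · have h5 : (R n + 1) * (K + 1) ≤ R n' * (K + 1) :=
          Nat.mul_le_mul_right _ (by omega)
        have h6 : (R n + 1) * (K + 1) = R n * (K + 1) + (K + 1) := by ring
        omega
      · rw [heq] at h1; omega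
      · have h5 : (R n' + 1) * (K + 1) ≤ R n * (K + 1) :=
          Nat.mul_le_mul_right _ (by omega)
        have h6 : (R n' + 1) * (K + 1) = R n' * (K + 1) + (K + 1) := by ring
        omega
    subst hjj
    refine ⟨Nat.eq_of_mul_eq_mul_right (show 0 < K + 1 by omega)
      (show R n * (K + 1) = R n' * (K + 1) by omega), rfl⟩
  set Tile : ℤ → ℕ → Set (ℤ × α) := fun n j =>
    {p : ℤ × α | p.2 = col n j ∧
      ∃ m : ℤ, (1 ≤ m ∧ m ≤ ((K + 3 : ℕ) : ℤ) ∧ m ≠ (i : ℤ)) ∧ p.1 = m + n} with hTiledef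
  set P : Set (Set (ℤ × α)) := {Q | ∃ n j, j < g n ∧ Q = Tile n j} with hPdef
  refine ⟨⋃₀ P, ⟨P, ?_, ?_, rfl⟩, ?_⟩
  · rintro Q ⟨n, j, hj, rfl⟩
    exact ⟨n, col n j, hcol_mem n j, rfl⟩
  · rintro Q ⟨n, j, hj, rfl⟩ Q' ⟨n', j', hj', rfl⟩ hne
    simp only [Function.onFun, id_eq]
    rw [Set.disjoint_left]
    intro p hp hp'
    obtain ⟨hpc, m, ⟨h1m, h2m, h3m⟩, hpm⟩ := hp
    obtain ⟨hpc', m', ⟨h1m', h2m', h3m'⟩, hpm'⟩ := hp'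
    have hcc : col n j = col n' j' := by rw [← hpc, hpc']
    obtain ⟨hR, hjj⟩ := hcol_inj n n' j j'
      (by have := hgK n; omega) (by have := hgK n'; omega) hcc
    have hnn : n = n' := hRn n n' hR (by push_cast; omega) (by push_cast; omega)
    exact hne (by rw [hnn, hjj])
  · intro n₀
    set Dfin : Finset ((_ : ℕ) × ℕ) := (Finset.range (K + 3)).sigma
      (fun v => Finset.range (if v + 1 = i then 0 else g (n₀ - 1 - (v : ℤ)))) with hDdef
    set F : (Σ _ : ℕ, ℕ) → ℤ × α :=
      (fun s => (n₀, col (n₀ - 1 - (s.1 : ℤ)) s.2)) with hFdef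
    have hset : {p : ℤ × α | p.1 = n₀ ∧ p.2 ∈ C} ∩ ⋃₀ P = ↑(Dfin.image F) := by
      ext p
      simp only [Set.mem_inter_iff, Set.mem_setOf_eq, Set.mem_sUnion, hPdef,
        Finset.coe_image, Set.mem_image, Finset.mem_coe, hDdef, Finset.mem_sigma,
        Finset.mem_range]
      constructor
      · rintro ⟨⟨hp1, hp2⟩, Q, ⟨n, j, hj, rfl⟩, hpQ⟩
        obtain ⟨hpc, m, ⟨h1m, h2m, h3m⟩, hpm⟩ := hpQ
        have hv1 : ((m - 1).toNat : ℤ) = m - 1 := Int.toNat_of_nonneg (by omega)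
        have harg : n₀ - 1 - (((m - 1).toNat : ℕ) : ℤ) = n := by omega
        refine ⟨⟨(m - 1).toNat, j⟩, ⟨?_, ?_⟩, ?_⟩
        · dsimp only; omega
        · dsimp only
          rw [if_neg (show (m - 1).toNat + 1 ≠ i by omega), harg]
          exact hj
        · simp only [hFdef]
          rw [harg]
          exact Prod.ext hp1.symm hpc.symm
      · rintro ⟨⟨v, j⟩, ⟨hv, hj⟩, rfl⟩
        have hv2 : v < K + 3 := hv
        have hj2 : j < (if v + 1 = i then 0 else g (n₀ - 1 - (v : ℤ))) := hj
        by_cases hvi : v + 1 = i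
        · rw [if_pos hvi] at hj2; omega
        · rw [if_neg hvi] at hj2
          refine ⟨⟨rfl, hcol_mem _ _⟩, Tile (n₀ - 1 - (v : ℤ)) j,
            ⟨n₀ - 1 - (v : ℤ), j, hj2, rfl⟩, ?_⟩
          refine ⟨rfl, (v : ℤ) + 1,
            ⟨by omega, by push_cast; omega, by omega⟩, ?_⟩
          show n₀ = (v : ℤ) + 1 + (n₀ - 1 - (v : ℤ))
          ring
    have hinj : Set.InjOn F ↑Dfin := by
      rintro ⟨v, j⟩ hvj ⟨v', j'⟩ hv'j' hFF
      simp only [Finset.mem_coe, hDdef, Finset.mem_sigma, Finset.mem_range] at hvj hv'j'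
      obtain ⟨hv0, hj0⟩ := hvj
      obtain ⟨hv0', hj0'⟩ := hv'j'
      have hv : v < K + 3 := hv0
      have hj : j < (if v + 1 = i then 0 else g (n₀ - 1 - (v : ℤ))) := hj0
      have hv' : v' < K + 3 := hv0'
      have hj' : j' < (if v' + 1 = i then 0 else g (n₀ - 1 - (v' : ℤ))) := hj0'
      have hvi : v + 1 ≠ i := by intro h; rw [if_pos h] at hj; omega
      have hvi' : v' + 1 ≠ i := by intro h; rw [if_pos h] at hj'; omega
      rw [if_neg hvi] at hj
      rw [if_neg hvi'] at hj'
      have hcc : col (n₀ - 1 - (v : ℤ)) j = col (n₀ - 1 - (v' : ℤ)) j' :=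
        congrArg Prod.snd hFF
      obtain ⟨hR, hjj⟩ := hcol_inj _ _ _ _
        (by have := hgK (n₀ - 1 - (v : ℤ)); omega)
        (by have := hgK (n₀ - 1 - (v' : ℤ)); omega) hcc
      have hnn : n₀ - 1 - (v : ℤ) = n₀ - 1 - (v' : ℤ) :=
        hRn _ _ hR (by push_cast; omega) (by push_cast; omega)
      have hvv : v = v' := by omega
      subst hvv
      subst hjj
      rfl
    rw [hset, Set.ncard_coe_finset, Finset.card_image_of_injOn hinj, hDdef,
      Finset.card_sigma]
    simp only [Finset.card_range]
    rw [show K + 3 - 1 = K + 2 from rfl]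
    have hcast : (((∑ v ∈ Finset.range (K + 3),
        if v + 1 = i then 0 else g (n₀ - 1 - (v : ℤ))) : ℕ) : ZMod (K + 2)) =
        ((1 : ℕ) : ZMod (K + 2)) := by
      push_cast
      have hmem : i - 1 ∈ Finset.range (K + 3) := by
        simp only [Finset.mem_range]; omega
      calc ∑ v ∈ Finset.range (K + 3),
            (if v + 1 = i then (0 : ZMod (K + 2)) else ((g (n₀ - 1 - (v : ℤ)) : ℕ) : ZMod (K + 2)))
          = ∑ v ∈ Finset.range (K + 3),
            (if v + 1 = i then (0 : ZMod (K + 2)) else ggF K i hi₁ hi2' (n₀ - 1 - (v : ℤ))) :=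
            Finset.sum_congr rfl (fun v _ => by split <;> simp [hgcast])
        _ = ∑ v ∈ (Finset.range (K + 3)).erase (i - 1),
            (if v + 1 = i then (0 : ZMod (K + 2)) else ggF K i hi₁ hi2' (n₀ - 1 - (v : ℤ))) :=
            (Finset.sum_erase _ (by rw [if_pos (by omega)])).symm
        _ = ∑ v ∈ (Finset.range (K + 3)).erase (i - 1), ggF K i hi₁ hi2' (n₀ - 1 - (v : ℤ)) :=
            Finset.sum_congr rfl (fun v hv => by
              have := Finset.ne_of_mem_erase hv
              rw [if_neg (by omega)])
        _ = (∑ v ∈ Finset.range (K + 3), ggF K i hi₁ hi2' (n₀ - 1 - (v : ℤ)))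
              - ggF K i hi₁ hi2' (n₀ - 1 - ((i - 1 : ℕ) : ℤ)) :=
            Finset.sum_erase_eq_sub hmem
        _ = (1 + ggF K i hi₁ hi2' (n₀ - (i : ℤ))) - ggF K i hi₁ hi2' (n₀ - (i : ℤ)) := by
            rw [show n₀ - 1 - ((i - 1 : ℕ) : ℤ) = n₀ - (i : ℤ) from by omega,
              ggF_rel K i hi₁ hi2' n₀]
        _ = ((1 : ℕ) : ZMod (K + 2)) := by push_cast; ring
    exact (ZMod.natCast_eq_natCast_iff _ _ _).mp hcast
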